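/- In the Bayesian model, the Modified Bayes estimator δ*_B(X,S²) = (1 − S²/(S²+nτ²))(X−ν) + ν has Bayes risk R(δ*_B; ν, τ², σ²) = pσ²·{1 + n(n+2)(1+τ²/σ²)·E_{χ²_{n+4}}[1/(u+nτ²/σ²)²] − 2n·E_{χ²_{n+2}}[1/(u+nτ²/σ²)]}. -/

import Mathlib

open MeasureTheory ProbabilityTheory Filter

/-- The chi-square distribution with `m` degrees of freedom: the Gamma distribution
with shape `m/2` and rate `1/2`. -/
noncomputable def chiSq (m : ℕ) : Measure ℝ := gammaMeasure ((m : ℝ) / 2) (1 / 2)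

/-- Expectation of `f` under the chi-square distribution with `m` degrees of freedom. -/
noncomputable def chiSqExp (m : ℕ) (f : ℝ → ℝ) : ℝ := ∫ u, f u ∂(chiSq m)

/-- `N_p(θ, v I_p)`: the measure on `ℝ^p` under which the coordinates are independent
Gaussians, coordinate `i` having mean `θ i` and variance `v`. -/
noncomputable def normalPi (p : ℕ) (θ : Fin p → ℝ) (v : ℝ) : Measure (Fin p → ℝ) :=
  Measure.pi fun i => gaussianReal (θ i) v.toNNReal

/-- Bayes risk of an estimator `δ(X, S²)` in the model
`θ ~ N_p(ν, τ²I_p)`, `X | θ ~ N_p(θ, σ²I_p)`, `S² = σ²U` with `U ~ χ²_n`,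
as the iterated integral `E_θ E_{S²} E_{X|θ} ‖δ(X,S²) − θ‖²`
(the squared Euclidean norm being the sum of squared coordinates). -/
noncomputable def bayesRisk (p n : ℕ) (ν : Fin p → ℝ) (τ2 σ2 : ℝ)
    (δ : (Fin p → ℝ) → ℝ → Fin p → ℝ) : ℝ :=
  ∫ θ, ∫ u, ∫ x, (∑ i, (δ x (σ2 * u) i - θ i) ^ 2) ∂(normalPi p θ σ2)
    ∂(chiSq n) ∂(normalPi p ν τ2)

/-- The Modified Bayes estimator `δ*_B(X,S²) = (1 − S²/(S²+nτ²))(X−ν) + ν`. -/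
noncomputable def modBayes (p n : ℕ) (ν : Fin p → ℝ) (τ2 : ℝ) :
    (Fin p → ℝ) → ℝ → Fin p → ℝ :=
  fun x s2 i => (1 - s2 / (s2 + n * τ2)) * (x i - ν i) + ν i

/-- The general shrinkage estimator `δ*c(X,S²) = (1 − c·S²/‖X−ν‖²)(X−ν) + ν`. -/
noncomputable def shrinkEst (p : ℕ) (ν : Fin p → ℝ) (c : ℝ) :
    (Fin p → ℝ) → ℝ → Fin p → ℝ :=
  fun x s2 i => (1 - c * s2 / (∑ j, (x j - ν j) ^ 2)) * (x i - ν i) + ν i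

/-- The Empirical Modified Bayes estimator
`δ*_EB(X,S²) = (1 − ((p−2)/(n+2))·S²/‖X−ν‖²)(X−ν) + ν`. -/
noncomputable def empModBayes (p n : ℕ) (ν : Fin p → ℝ) :
    (Fin p → ℝ) → ℝ → Fin p → ℝ :=
  shrinkEst p ν (((p : ℝ) - 2) / ((n : ℝ) + 2))

open Real Set
open scoped ENNReal NNReal

section Helpers

variable {m : ℕ}

lemma my_integral_gammaMeasure {a r : ℝ} (ha : 0 < a) (hr : 0 < r) (g : ℝ → ℝ) :
    ∫ u, g u ∂(gammaMeasure a r) = ∫ u, gammaPDFReal a r u * g u := by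
  rw [gammaMeasure]
  have h1 : gammaPDF a r = fun u => ((gammaPDFReal a r u).toNNReal : ℝ≥0∞) := rfl
  rw [h1, integral_withDensity_eq_integral_smul ((measurable_gammaPDFReal a r).real_toNNReal)]
  congr 1
  ext u
  rw [NNReal.smul_def, smul_eq_mul, Real.coe_toNNReal _ (gammaPDFReal_nonneg ha hr u)]

lemma chiSq_eq_integral (hm : 0 < m) (g : ℝ → ℝ) :
    ∫ u, g u ∂(chiSq m) = ∫ u, gammaPDFReal ((m : ℝ)/2) (1/2) u * g u :=
  my_integral_gammaMeasure (by positivity) (by norm_num) g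

instance chiSq_prob (m : ℕ) [NeZero m] : IsProbabilityMeasure (chiSq m) :=
  isProbabilityMeasure_gammaMeasure (by have := Nat.pos_of_ne_zero (NeZero.ne m); positivity) (by norm_num)

lemma gammaPDFReal_shift (hm : 0 < m) (u : ℝ) :
    u * gammaPDFReal ((m : ℝ)/2) (1/2) u = m * gammaPDFReal (((m : ℝ)+2)/2) (1/2) u := by
  have hm' : (0:ℝ) < (m : ℝ)/2 := by positivity
  unfold gammaPDFReal
  by_cases hu : 0 ≤ u
  · rw [if_pos hu, if_pos hu]
    rcases eq_or_lt_of_le hu with rfl | hu'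
    · have h0 : ((m:ℝ)+2)/2 - 1 = (m:ℝ)/2 := by ring
      rw [h0, Real.zero_rpow hm'.ne']
      ring
    · have h2 : ((m:ℝ)+2)/2 - 1 = ((m:ℝ)/2 - 1) + 1 := by ring
      have h3 : ((m:ℝ)+2)/2 = (m:ℝ)/2 + 1 := by ring
      rw [h2, h3, Real.rpow_add_one hu'.ne', Real.rpow_add_one (by norm_num : (1:ℝ)/2 ≠ 0),
        Real.Gamma_add_one hm'.ne']
      have hΓ : Real.Gamma ((m:ℝ)/2) ≠ 0 := (Real.Gamma_pos_of_pos hm').ne'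
      have hmne : (m:ℝ) ≠ 0 := by positivity
      field_simp
  · rw [if_neg hu, if_neg hu]
    ring

/-- Moment shift identity for chi-square: unconditional in `g`. -/
lemma chiSq_shift (hm : 0 < m) (g : ℝ → ℝ) :
    ∫ u, u * g u ∂(chiSq m) = m * ∫ u, g u ∂(chiSq (m + 2)) := by
  rw [chiSq_eq_integral hm, chiSq_eq_integral (by omega), ← integral_const_mul]
  congr 1
  ext u
  have := gammaPDFReal_shift hm u
  have hc : ((m + 2 : ℕ) : ℝ) = (m : ℝ) + 2 := by push_cast; ring
  rw [hc]
  calc gammaPDFReal ((m:ℝ)/2) (1/2) u * (u * g u)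
      = (u * gammaPDFReal ((m:ℝ)/2) (1/2) u) * g u := by ring
    _ = ((m:ℝ) * gammaPDFReal (((m:ℝ)+2)/2) (1/2) u) * g u := by rw [this]
    _ = (m:ℝ) * (gammaPDFReal (((m:ℝ)+2)/2) (1/2) u * g u) := by ring

lemma chiSq_ae_pos (m : ℕ) : ∀ᵐ u ∂(chiSq m), 0 < u := by
  rw [ae_iff]
  have hset : {u : ℝ | ¬ 0 < u} = Iic 0 := by ext u; simp
  rw [hset]
  have h1 : chiSq m (Iio 0) = 0 := by
    rw [chiSq, gammaMeasure, withDensity_apply _ measurableSet_Iio]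
    exact lintegral_gammaPDF_of_nonpos le_rfl
  have h2 : chiSq m {(0:ℝ)} = 0 := by
    refine (withDensity_absolutelyContinuous _ _) ?_
    simp
  have : Iic (0:ℝ) = Iio 0 ∪ {0} := by
    ext x; simp [le_iff_lt_or_eq]
  rw [this]
  exact le_antisymm ((measure_union_le _ _).trans (by rw [h1, h2]; simp)) zero_le

/-- bounded a.e. measurable functions are integrable wrt a probability measure -/
lemma integrable_of_ae_bound {μ : Measure ℝ} [IsProbabilityMeasure μ] {f : ℝ → ℝ} {C : ℝ}
    (hf : AEStronglyMeasurable f μ) (h : ∀ᵐ u ∂μ, ‖f u‖ ≤ C) : Integrable f μ :=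
  Integrable.mono' (integrable_const C) hf h

end Helpers

section Gauss

lemma my_integral_gaussianReal (θ : ℝ) {v : ℝ≥0} (hv : v ≠ 0) (g : ℝ → ℝ) :
    ∫ x, g x ∂(gaussianReal θ v) = ∫ x, gaussianPDFReal θ v x * g x := by
  rw [gaussianReal_of_var_ne_zero θ hv]
  have h1 : gaussianPDF θ v = fun x => ((gaussianPDFReal θ v x).toNNReal : ℝ≥0∞) := rfl
  rw [h1, integral_withDensity_eq_integral_smul ((measurable_gaussianPDFReal θ v).real_toNNReal)]
  congr 1
  ext x
  rw [NNReal.smul_def, smul_eq_mul, Real.coe_toNNReal _ (gaussianPDFReal_nonneg θ v x)]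

lemma my_integral_x_exp {b : ℝ} : ∫ x : ℝ, x * rexp (-b*x^2) = 0 := by
  have h : ∫ x : ℝ, x * rexp (-b*x^2) = ∫ x : ℝ, (-x) * rexp (-b*(-x)^2) :=
    (integral_neg_eq_self (fun x : ℝ => x * rexp (-b*x^2)) volume).symm
  have h2 : ∫ x : ℝ, (-x) * rexp (-b*(-x)^2) = - ∫ x : ℝ, x * rexp (-b*x^2) := by
    rw [← integral_neg]
    congr 1
    ext x
    rw [neg_sq]
    ring
  rw [h2] at h
  linarith

lemma my_integral_sq_exp {b : ℝ} (hb : 0 < b) :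
    ∫ x : ℝ, x^2 * rexp (-b*x^2) = (1/b) ^ ((3:ℝ)/2) * Real.Gamma (3/2) := by
  have habs : ∫ x : ℝ, x^2 * rexp (-b*x^2) = 2 * ∫ x in Ioi (0:ℝ), x^2 * rexp (-b*x^2) := by
    rw [← integral_comp_abs (f := fun x => x^2 * rexp (-b*x^2))]
    congr 1
    ext x
    rw [sq_abs]
  set g : ℝ → ℝ := fun y => (1/2) * (y ^ ((3:ℝ)/2 - 1) * rexp (-(b*y))) with hg
  have hsub : ∫ x in Ioi (0:ℝ), x^2 * rexp (-b*x^2) = ∫ y in Ioi (0:ℝ), g y := by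
    rw [← integral_comp_rpow_Ioi_of_pos (g := g) (p := 2) two_pos]
    refine setIntegral_congr_fun measurableSet_Ioi (fun x hx => ?_)
    have hx' : (0:ℝ) < x := hx
    have h1 : x ^ ((2:ℝ) - 1) = x := by norm_num
    have h2 : x ^ (2:ℝ) = x^2 := by
      rw [show (2:ℝ) = ((2:ℕ):ℝ) by norm_num, Real.rpow_natCast]
    have h3 : (x^2 : ℝ) ^ ((3:ℝ)/2 - 1) = x := by
      rw [show (3:ℝ)/2 - 1 = 1/2 by norm_num, ← Real.sqrt_eq_rpow, Real.sqrt_sq hx'.le]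
    rw [smul_eq_mul, h1, h2, hg]
    simp only [h3]
    ring_nf
  have hval : ∫ y in Ioi (0:ℝ), g y = (1/2) * ((1/b) ^ ((3:ℝ)/2) * Real.Gamma (3/2)) := by
    rw [hg, integral_const_mul, Real.integral_rpow_mul_exp_neg_mul_Ioi (by norm_num) hb]
  rw [habs, hsub, hval]
  ring

lemma integrable_poly_exp {b : ℝ} (hb : 0 < b) (A B C : ℝ) :
    Integrable (fun x : ℝ => (A*x^2 + B*x + C) * rexp (-b*x^2)) := by
  have h2 : Integrable (fun x:ℝ => x^2 * rexp (-b*x^2)) := by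
    have h := integrable_rpow_mul_exp_neg_mul_sq hb (s := 2) (by norm_num)
    refine h.congr (ae_of_all _ fun x => ?_)
    simp only []
    rw [show (2:ℝ) = ((2:ℕ):ℝ) by norm_num, Real.rpow_natCast]
  have h1 := integrable_mul_exp_neg_mul_sq hb
  have h0 := integrable_exp_neg_mul_sq hb
  refine (((h2.const_mul A).add (h1.const_mul B)).add (h0.const_mul C)).congr
    (ae_of_all _ fun x => by simp only [Pi.add_apply]; ring)

end Gauss

section GaussMoment

variable {v : ℝ}

lemma coe_toNNReal_of_pos (hv : 0 < v) : ((v.toNNReal : ℝ≥0) : ℝ) = v := Real.coe_toNNReal _ hv.le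

lemma toNNReal_ne_zero (hv : 0 < v) : v.toNNReal ≠ 0 := by
  simp only [ne_eq, Real.toNNReal_eq_zero, not_le]
  exact hv

lemma gauss_pdf0 (hv : 0 < v) (x : ℝ) :
    gaussianPDFReal 0 v.toNNReal x = (√(2*π*v))⁻¹ * rexp (-(2*v)⁻¹ * x^2) := by
  unfold gaussianPDFReal
  rw [coe_toNNReal_of_pos hv]
  congr 1
  rw [sub_zero]
  congr 1
  field_simp

lemma gauss_moment (θ : ℝ) (hv : 0 < v) (c d : ℝ) :
    ∫ x, (c*x + d)^2 ∂(gaussianReal θ v.toNNReal) = c^2 * v + (c*θ + d)^2 := by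
  have hv' := toNNReal_ne_zero hv
  rw [my_integral_gaussianReal θ hv']
  have hshift : ∫ x, gaussianPDFReal θ v.toNNReal x * (c*x+d)^2
      = ∫ x, gaussianPDFReal 0 v.toNNReal x * (c*(x+θ)+d)^2 := by
    rw [← integral_add_right_eq_self (fun x => gaussianPDFReal θ v.toNNReal x * (c*x+d)^2) θ]
    congr 1
    ext x
    rw [gaussianPDFReal_add x θ, sub_self]
  rw [hshift]
  set K : ℝ := (√(2*π*v))⁻¹ with hK
  set b : ℝ := (2*v)⁻¹ with hb
  have hbpos : 0 < b := by positivity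
  set e : ℝ := c*θ + d with he
  have hfun : (fun x => gaussianPDFReal 0 v.toNNReal x * (c*(x+θ)+d)^2)
      = fun x => (K*c^2) * (x^2 * rexp (-b*x^2)) +
          ((K*(2*c*e)) * (x * rexp (-b*x^2)) + (K*e^2) * rexp (-b*x^2)) := by
    ext x
    rw [gauss_pdf0 hv x]
    ring
  have h2 : Integrable (fun x:ℝ => x^2 * rexp (-b*x^2)) := by
    have h := integrable_rpow_mul_exp_neg_mul_sq hbpos (s := 2) (by norm_num)
    refine h.congr (ae_of_all _ fun x => ?_)
    simp only []
    rw [show (2:ℝ) = ((2:ℕ):ℝ) by norm_num, Real.rpow_natCast]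
  have h1 := integrable_mul_exp_neg_mul_sq hbpos
  have h0 := integrable_exp_neg_mul_sq hbpos
  have hg12 : Integrable (fun x:ℝ => K*(2*c*e) * (x * rexp (-b*x^2)) + K*e^2 * rexp (-b*x^2))
      volume :=
    ((h1.const_mul (K*(2*c*e))).add (h0.const_mul (K*e^2))).congr
      (ae_of_all _ fun x => by simp [Pi.add_apply])
  rw [hfun, integral_add (h2.const_mul _) hg12,
    integral_add (μ := volume) (h1.const_mul _) (h0.const_mul _),
    integral_const_mul, integral_const_mul, integral_const_mul,
    my_integral_sq_exp hbpos, my_integral_x_exp, integral_gaussian]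
  have hgamma : Real.Gamma (3/2) = √π/2 := by
    rw [show (3:ℝ)/2 = 1/2 + 1 by norm_num, Real.Gamma_add_one (by norm_num),
      Real.Gamma_one_half_eq]
    ring
  have hob : 1/b = 2*v := by rw [hb]; field_simp
  have h32 : ((2*v:ℝ)) ^ ((3:ℝ)/2) = (2*v) * √(2*v) := by
    rw [show (3:ℝ)/2 = 1 + 1/2 by norm_num, Real.rpow_add (by positivity), Real.rpow_one,
      ← Real.sqrt_eq_rpow]
  have hsq : √(2*π*v) = √(2*v) * √π := by
    rw [← Real.sqrt_mul (by positivity)]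
    ring_nf
  have hπb : √(π/b) = √(2*v) * √π := by
    rw [hb]
    rw [show π / (2*v)⁻¹ = (2*v) * π by field_simp]
    rw [Real.sqrt_mul (by positivity)]
  have hs2v : √(2*v) ≠ 0 := by positivity
  have hsπ : √π ≠ 0 := by positivity
  rw [hgamma, hob, h32, hπb, hK, hsq]
  field_simp
  ring

lemma gauss_integrable (θ : ℝ) (hv : 0 < v) (c d : ℝ) :
    Integrable (fun x => (c*x + d)^2) (gaussianReal θ v.toNNReal) := by
  have hv' := toNNReal_ne_zero hv
  rw [gaussianReal_of_var_ne_zero θ hv',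
    integrable_withDensity_iff (measurable_gaussianPDF _ _)
      (ae_of_all _ fun x => ENNReal.ofReal_lt_top)]
  have heq : (fun x => (c*x+d)^2 * (gaussianPDF θ v.toNNReal x).toReal)
      = fun x => ((fun y => (c*(y+θ)+d)^2 * gaussianPDFReal 0 v.toNNReal y) (x - θ)) := by
    ext x
    simp only [gaussianPDF]
    rw [ENNReal.toReal_ofReal (gaussianPDFReal_nonneg _ _ _), gaussianPDFReal_sub x θ,
      zero_add]
    ring_nf
  rw [heq]
  set b : ℝ := (2*v)⁻¹ with hb
  have hbpos : 0 < b := by positivity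
  have hI : Integrable (fun y : ℝ => (c*(y+θ)+d)^2 * gaussianPDFReal 0 v.toNNReal y) volume := by
    refine (integrable_poly_exp hbpos (c^2 * (√(2*π*v))⁻¹) (2*c*(c*θ+d) * (√(2*π*v))⁻¹)
      ((c*θ+d)^2 * (√(2*π*v))⁻¹)).congr (ae_of_all _ fun y => ?_)
    simp only []
    rw [gauss_pdf0 hv y]
    ring
  exact hI.comp_sub_right θ

end GaussMoment

section Pi

variable {p : ℕ} (μ : Fin p → Measure ℝ) [∀ i, IsProbabilityMeasure (μ i)]

lemma my_map_eval_pi (i : Fin p) : (Measure.pi μ).map (Function.eval i) = μ i := by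
  ext s hs
  rw [Measure.map_apply (measurable_pi_apply i) hs, Set.eval_preimage, Measure.pi_pi]
  rw [Finset.prod_eq_single i (fun j _ hj => by
    rw [Function.update_of_ne hj]; exact measure_univ) (by simp)]
  rw [Function.update_self]

lemma integral_eval (i : Fin p) (g : ℝ → ℝ) (hg : AEStronglyMeasurable g (μ i)) :
    ∫ x, g (x i) ∂Measure.pi μ = ∫ y, g y ∂(μ i) := by
  have hg' : AEStronglyMeasurable g ((Measure.pi μ).map (Function.eval i)) := by
    rw [my_map_eval_pi]; exact hg
  conv_rhs => rw [← my_map_eval_pi μ i]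
  rw [integral_map (measurable_pi_apply i).aemeasurable hg']

lemma integrable_eval (i : Fin p) (g : ℝ → ℝ) (hg : AEStronglyMeasurable g (μ i))
    (hint : Integrable g (μ i)) : Integrable (fun x => g (x i)) (Measure.pi μ) := by
  have hg' : AEStronglyMeasurable g ((Measure.pi μ).map (Function.eval i)) := by
    rw [my_map_eval_pi]; exact hg
  have h := (integrable_map_measure hg' (measurable_pi_apply i).aemeasurable).mp
    (by rw [my_map_eval_pi]; exact hint)
  exact h

lemma normalPi_integral_sum {q : ℕ} (θ : Fin q → ℝ) {σ2 : ℝ} (hσ2 : 0 < σ2) (c : ℝ)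
    (d : Fin q → ℝ) :
    ∫ x, (∑ i, (c * x i + d i)^2) ∂normalPi q θ σ2
      = ∑ i, (c^2 * σ2 + (c * θ i + d i)^2) := by
  unfold normalPi
  rw [integral_finset_sum _ (fun i _ => integrable_eval _ i (fun y => (c*y + d i)^2)
    (Continuous.aestronglyMeasurable (by continuity)) (gauss_integrable (θ i) hσ2 c (d i)))]
  exact Finset.sum_congr rfl fun i _ => by
    rw [integral_eval _ i (fun y => (c*y + d i)^2) (Continuous.aestronglyMeasurable
      (by continuity)), gauss_moment (θ i) hσ2 c (d i)]

lemma normalPi_integrable_sum {q : ℕ} (θ : Fin q → ℝ) {σ2 : ℝ} (hσ2 : 0 < σ2) (c : ℝ)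
    (d : Fin q → ℝ) :
    Integrable (fun x => ∑ i, (c * x i + d i)^2) (normalPi q θ σ2) := by
  unfold normalPi
  exact integrable_finset_sum _ (fun i _ => integrable_eval _ i (fun y => (c*y + d i)^2)
    (Continuous.aestronglyMeasurable (by continuity)) (gauss_integrable (θ i) hσ2 c (d i)))

end Pi


theorem stmt_5 (p n : ℕ) (hp : 1 ≤ p) (hn : 1 ≤ n) (ν : Fin p → ℝ) (τ2 σ2 : ℝ)
    (hτ2 : 0 < τ2) (hσ2 : 0 < σ2) :
    bayesRisk p n ν τ2 σ2 (modBayes p n ν τ2) =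
      (p : ℝ) * σ2 * (1 + (n : ℝ) * ((n : ℝ) + 2) * (1 + τ2 / σ2) *
          chiSqExp (n + 4) (fun u => 1 / (u + (n : ℝ) * (τ2 / σ2)) ^ 2) -
        2 * (n : ℝ) * chiSqExp (n + 2) (fun u => 1 / (u + (n : ℝ) * (τ2 / σ2)))) := by
  haveI : NeZero n := ⟨by omega⟩
  have hn0 : 0 < n := hn
  set t : ℝ := (n : ℝ) * (τ2 / σ2) with ht
  have htpos : 0 < t := by positivity
  set φ : ℝ → ℝ := fun u => σ2 * u / (σ2 * u + (n : ℝ) * τ2) with hφ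
  -- denominator factorization
  have hden : ∀ u : ℝ, σ2 * u + (n : ℝ) * τ2 = σ2 * (u + t) := by
    intro u
    rw [ht]
    field_simp
  have hφ_eq : ∀ u : ℝ, 0 < u → φ u = u / (u + t) := by
    intro u hu
    have hut : 0 < u + t := by linarith
    rw [hφ]
    simp only []
    rw [hden u, mul_div_mul_left _ _ hσ2.ne']
  have hφ_mem : ∀ u : ℝ, 0 < u → 0 ≤ φ u ∧ φ u ≤ 1 := by
    intro u hu
    have hut : 0 < u + t := by linarith
    rw [hφ_eq u hu]
    constructor
    · positivity
    · rw [div_le_one hut]; linarith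
  have hφmeas : Measurable φ := by
    apply Measurable.div
    · exact measurable_id.const_mul σ2
    · exact (measurable_id.const_mul σ2).add_const _
  -- integrability of the chi-square integrands
  have hA_int : Integrable (fun u => (1 - φ u)^2) (chiSq n) := by
    refine integrable_of_ae_bound (((measurable_const.sub hφmeas).pow_const 2).aestronglyMeasurable)
      (C := 1) ?_
    filter_upwards [chiSq_ae_pos n] with u hu
    obtain ⟨h0, h1⟩ := hφ_mem u hu
    rw [Real.norm_eq_abs, abs_of_nonneg (by positivity)]
    nlinarith
  have hB_int : Integrable (fun u => (φ u)^2) (chiSq n) := by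
    refine integrable_of_ae_bound ((hφmeas.pow_const 2).aestronglyMeasurable) (C := 1) ?_
    filter_upwards [chiSq_ae_pos n] with u hu
    obtain ⟨h0, h1⟩ := hφ_mem u hu
    rw [Real.norm_eq_abs, abs_of_nonneg (by positivity)]
    nlinarith
  set A : ℝ := ∫ u, (1 - φ u)^2 ∂(chiSq n) with hA
  set B : ℝ := ∫ u, (φ u)^2 ∂(chiSq n) with hB
  -- inner Gaussian integral
  have hinner : ∀ (θ : Fin p → ℝ) (u : ℝ),
      (∫ x, (∑ i, (modBayes p n ν τ2 x (σ2*u) i - θ i)^2) ∂normalPi p θ σ2)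
        = (p:ℝ) * σ2 * (1 - φ u)^2 + (φ u)^2 * ∑ i, (θ i - ν i)^2 := by
    intro θ u
    have key := normalPi_integral_sum θ hσ2 (1 - φ u)
      (fun i => ν i - (1 - φ u) * ν i - θ i)
    have h1 : (∫ x, (∑ i, (modBayes p n ν τ2 x (σ2*u) i - θ i)^2) ∂normalPi p θ σ2)
        = ∫ x, (∑ i, ((1 - φ u) * x i + (ν i - (1 - φ u) * ν i - θ i))^2) ∂normalPi p θ σ2 := by
      congr 1
      funext x
      refine Finset.sum_congr rfl fun i _ => ?_
      unfold modBayes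
      rw [hφ]
      ring
    rw [h1, key]
    rw [Finset.sum_add_distrib, Finset.sum_const, Finset.card_univ, Fintype.card_fin,
      nsmul_eq_mul, Finset.mul_sum]
    congr 1
    · ring
    · refine Finset.sum_congr rfl fun i _ => ?_
      ring
  -- middle chi-square integral
  have hmid : ∀ θ : Fin p → ℝ,
      (∫ u, ((p:ℝ) * σ2 * (1 - φ u)^2 + (φ u)^2 * ∑ i, (θ i - ν i)^2) ∂(chiSq n))
        = (p:ℝ) * σ2 * A + B * ∑ i, (θ i - ν i)^2 := by
    intro θ
    rw [integral_add (hA_int.const_mul _) (hB_int.mul_const _), integral_const_mul,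
      integral_mul_const]
  -- outer Gaussian integral
  have hQ_int : Integrable (fun θ : Fin p → ℝ => ∑ i, (θ i - ν i)^2) (normalPi p ν τ2) := by
    refine (normalPi_integrable_sum ν hτ2 1 (fun i => -ν i)).congr (ae_of_all _ fun θ => ?_)
    refine Finset.sum_congr rfl fun i _ => by ring
  have hQ_val : (∫ θ, (∑ i, (θ i - ν i)^2) ∂normalPi p ν τ2) = (p:ℝ) * τ2 := by
    have key := normalPi_integral_sum ν hτ2 1 (fun i => -ν i)
    have h1 : (∫ θ, (∑ i, (θ i - ν i)^2) ∂normalPi p ν τ2)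
        = ∫ θ, (∑ i, ((1:ℝ) * θ i + (-ν i))^2) ∂normalPi p ν τ2 := by
      congr 1
      funext θ
      exact Finset.sum_congr rfl fun i _ => by ring
    rw [h1, key]
    simp
  -- assemble
  have hmain : bayesRisk p n ν τ2 σ2 (modBayes p n ν τ2)
      = (p:ℝ) * σ2 * A + B * ((p:ℝ) * τ2) := by
    unfold _root_.bayesRisk
    have h1 : (fun θ : Fin p → ℝ => ∫ u, ∫ x,
        (∑ i, (modBayes p n ν τ2 x (σ2 * u) i - θ i) ^ 2) ∂(normalPi p θ σ2) ∂(chiSq n))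
        = fun θ => (p:ℝ) * σ2 * A + B * ∑ i, (θ i - ν i)^2 := by
      funext θ
      rw [show (fun u => ∫ x, (∑ i, (modBayes p n ν τ2 x (σ2 * u) i - θ i) ^ 2)
          ∂(normalPi p θ σ2)) = fun u => (p:ℝ) * σ2 * (1 - φ u)^2
            + (φ u)^2 * ∑ i, (θ i - ν i)^2 from funext fun u => hinner θ u]
      exact hmid θ
    haveI : IsProbabilityMeasure (normalPi p ν τ2) := by
      unfold normalPi; infer_instance
    rw [h1, integral_add (integrable_const _) (hQ_int.const_mul B), integral_const,
      integral_const_mul, hQ_val]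
    simp
  rw [hmain]
  -- evaluate A and B via the chi-square shift identities
  have hBval : B = (n:ℝ) * ((n:ℝ) + 2) * chiSqExp (n+4) (fun u => 1/(u + t)^2) := by
    have h1 : B = ∫ u, u * (u * (1/(u + t)^2)) ∂(chiSq n) := by
      refine integral_congr_ae ?_
      filter_upwards [chiSq_ae_pos n] with u hu
      have hut : (0:ℝ) < u + t := by linarith
      rw [hφ_eq u hu, div_pow]
      field_simp
    rw [h1, chiSq_shift hn0 (fun u => u * (1/(u + t)^2)),
      chiSq_shift (by omega : 0 < n + 2) (fun u => 1/(u + t)^2)]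
    rw [show n + 2 + 2 = n + 4 from by omega]
    unfold chiSqExp
    push_cast
    ring
  have hAval : A = 1 - 2*(n:ℝ) * chiSqExp (n+2) (fun u => 1/(u + t))
      + (n:ℝ) * ((n:ℝ) + 2) * chiSqExp (n+4) (fun u => 1/(u + t)^2) := by
    have h1 : A = ∫ u, ((1:ℝ) - 2 * (u * (1/(u + t))) + u * (u * (1/(u + t)^2))) ∂(chiSq n) := by
      refine integral_congr_ae ?_
      filter_upwards [chiSq_ae_pos n] with u hu
      have hut : (0:ℝ) < u + t := by linarith
      rw [hφ_eq u hu]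
      field_simp
      ring
    have hX_int : Integrable (fun u => u * (1/(u + t))) (chiSq n) := by
      refine integrable_of_ae_bound ((measurable_id.mul
        ((measurable_id.add_const t).inv.const_mul 1)).aestronglyMeasurable) (C := 1) ?_
      filter_upwards [chiSq_ae_pos n] with u hu
      have hut : (0:ℝ) < u + t := by linarith
      rw [Real.norm_eq_abs, mul_one_div, abs_of_nonneg (by positivity), div_le_one hut]
      linarith
    have hY_int : Integrable (fun u => u * (u * (1/(u + t)^2))) (chiSq n) := by
      refine integrable_of_ae_bound ((measurable_id.mul (measurable_id.mul
        (((measurable_id.add_const t).pow_const 2).inv.const_mul 1))).aestronglyMeasurable)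
        (C := 1) ?_
      filter_upwards [chiSq_ae_pos n] with u hu
      have hut : (0:ℝ) < u + t := by linarith
      have heq : u * (u * (1/(u + t)^2)) = u^2/(u+t)^2 := by field_simp
      rw [Real.norm_eq_abs, heq, abs_of_nonneg (by positivity), div_le_one (by positivity)]
      nlinarith
    have hXint2 : Integrable (fun u : ℝ => 1 - 2 * (u * (1/(u + t)))) (chiSq n) :=
      ((integrable_const 1).sub (hX_int.const_mul 2)).congr
        (ae_of_all _ fun u => by simp [Pi.sub_apply])
    rw [h1, integral_add hXint2 hY_int,
      integral_sub (integrable_const 1) (hX_int.const_mul 2), integral_const_mul,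
      chiSq_shift hn0 (fun u => 1/(u + t)),
      chiSq_shift hn0 (fun u => u * (1/(u + t)^2)),
      chiSq_shift (by omega : 0 < n + 2) (fun u => 1/(u + t)^2)]
    rw [show n + 2 + 2 = n + 4 from by omega]
    unfold chiSqExp
    simp only [integral_const, probReal_univ, measure_univ, ENNReal.toReal_one, smul_eq_mul, one_mul]
    push_cast
    ring
  rw [hAval, hBval]
  have hst : σ2 ≠ 0 := hσ2.ne'
  field_simp
  ring
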